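/- Let G be a tree. Then the independence complex Δ(G) is sortable (with respect to some labeling of the vertices) if and only if G is a path graph. -/

import Mathlib

/-- The first component of the sorting `sort(F,G)`: the elements at odd
positions (1-indexed) of the weakly increasing list of the multiset union of `F` and `G`. -/
def sortFst (F G : Finset ℕ) : Finset ℕ :=
  ((((F.val + G.val).sort (· ≤ ·)).zipIdx.filter (fun p => p.2 % 2 = 0)).map Prod.fst).toFinset

/-- The second component of the sorting `sort(F,G)`: the elements at even
positions (1-indexed). -/
def sortSnd (F G : Finset ℕ) : Finset ℕ :=
  ((((F.val + G.val).sort (· ≤ ·)).zipIdx.filter (fun p => p.2 % 2 = 1)).map Prod.fst).toFinset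

def SortableWrt (Δ : Set (Finset ℕ)) : Prop :=
  ∀ F ∈ Δ, ∀ G ∈ Δ, sortFst F G ∈ Δ ∧ sortSnd F G ∈ Δ

/-- The independence complex of a graph on the vertex type `V`,
transported to `ℕ` via the labeling `f`. -/
def labeledIndepComplex {V : Type*} [DecidableEq V] (G : SimpleGraph V) (f : V → ℕ) :
    Set (Finset ℕ) :=
  {F | ∃ H : Finset V, (∀ a ∈ H, ∀ b ∈ H, ¬ G.Adj a b) ∧ F = H.image f}

/-- The independence complex of `G` is sortable with respect to some
labeling of the vertices. -/
def SortableGraph {V : Type*} [DecidableEq V] (G : SimpleGraph V) : Prop :=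
  ∃ f : V → ℕ, Function.Injective f ∧ SortableWrt (labeledIndepComplex G f)

/-! ### Generic facts about `sortFst` and `sortSnd` -/

lemma mem_sortPart_iff {F G : Finset ℕ} {x : ℕ} {r : ℕ} :
    x ∈ ((((F.val + G.val).sort (· ≤ ·)).zipIdx.filter (fun p => p.2 % 2 = r)).map Prod.fst).toFinset
      ↔ ∃ i, i % 2 = r ∧ ∃ h : i < ((F.val + G.val).sort (· ≤ ·)).length,
          ((F.val + G.val).sort (· ≤ ·))[i] = x := by
  simp only [List.mem_toFinset, List.mem_map, List.mem_filter]
  constructor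
  · rintro ⟨⟨y, i⟩, ⟨hmem, hpar⟩, rfl⟩
    have := List.mem_zipIdx_iff_getElem?.1 hmem
    rw [List.getElem?_eq_some_iff] at this
    exact ⟨i, by simpa using hpar, this⟩
  · rintro ⟨i, hpar, h, hget⟩
    exact ⟨(x, i), ⟨List.mk_mem_zipIdx_iff_getElem?.2 (by rw [List.getElem?_eq_some_iff]; exact ⟨h, hget⟩),
      by simpa using hpar⟩, rfl⟩

lemma mem_sortFst_iff {F G : Finset ℕ} {x : ℕ} :
    x ∈ sortFst F G ↔ ∃ i, i % 2 = 0 ∧ ∃ h : i < ((F.val + G.val).sort (· ≤ ·)).length,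
        ((F.val + G.val).sort (· ≤ ·))[i] = x := mem_sortPart_iff

lemma mem_sortSnd_iff {F G : Finset ℕ} {x : ℕ} :
    x ∈ sortSnd F G ↔ ∃ i, i % 2 = 1 ∧ ∃ h : i < ((F.val + G.val).sort (· ≤ ·)).length,
        ((F.val + G.val).sort (· ≤ ·))[i] = x := mem_sortPart_iff

lemma mem_union_of_mem_sort {F G : Finset ℕ} {x : ℕ}
    (hx : x ∈ ((F.val + G.val).sort (· ≤ ·))) : x ∈ F ∨ x ∈ G := by
  rw [Multiset.mem_sort, Multiset.mem_add] at hx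
  exact hx

lemma getElem_sort_mem {F G : Finset ℕ} {i : ℕ} (h : i < ((F.val + G.val).sort (· ≤ ·)).length) :
    ((F.val + G.val).sort (· ≤ ·))[i] ∈ F ∨ ((F.val + G.val).sort (· ≤ ·))[i] ∈ G :=
  mem_union_of_mem_sort (List.getElem_mem h)

lemma count_ge_two {F G : Finset ℕ} {i : ℕ}
    (h : i + 1 < ((F.val + G.val).sort (· ≤ ·)).length)
    (heq : ((F.val + G.val).sort (· ≤ ·))[i] = ((F.val + G.val).sort (· ≤ ·))[i+1]'h) :
    ((F.val + G.val).sort (· ≤ ·))[i]'(by omega) ∈ F ∧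
    ((F.val + G.val).sort (· ≤ ·))[i]'(by omega) ∈ G := by
  set L := ((F.val + G.val).sort (· ≤ ·)) with hL
  have hi : i < L.length := by omega
  set x := L[i]'hi with hx
  have hdrop : L.drop i = x :: x :: L.drop (i+2) := by
    rw [List.drop_eq_getElem_cons hi, List.drop_eq_getElem_cons h]
    have heq' : x = L[i+1]'h := heq
    simp [← heq', hx]
  have hcount : 2 ≤ L.count x := by
    calc 2 ≤ (L.drop i).count x := by rw [hdrop]; simp [List.count_cons]
    _ ≤ L.count x := (List.drop_sublist i L).count_le x
  have hmc : (F.val + G.val).count x = F.val.count x + G.val.count x := Multiset.count_add x _ _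
  have hLc : (F.val + G.val).count x = L.count x := by
    conv_lhs => rw [← Multiset.sort_eq (F.val + G.val) (· ≤ ·)]
    rw [← hL, Multiset.coe_count]
  have hF1 : F.val.count x ≤ 1 := Multiset.nodup_iff_count_le_one.1 F.nodup x
  have hG1 : G.val.count x ≤ 1 := Multiset.nodup_iff_count_le_one.1 G.nodup x
  constructor
  · have : 1 ≤ F.val.count x := by omega
    exact Multiset.one_le_count_iff_mem.1 this
  · have : 1 ≤ G.val.count x := by omega
    exact Multiset.one_le_count_iff_mem.1 this

lemma list_no_consec (L : List ℕ) (hsort : L.Pairwise (· ≤ ·))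
    (hkey : ∀ i, ∀ h : i + 1 < L.length, L[i]'(by omega) = L[i+1]'h →
       ∀ w ∈ L, L[i]'(by omega) + 1 ≠ w ∧ w + 1 ≠ L[i]'(by omega)) :
    ∀ i j, i % 2 = j % 2 → ∀ hi : i < L.length, ∀ hj : j < L.length,
      L[i] + 1 ≠ L[j] := by
  have hle : ∀ (i j : ℕ) (_hij : i ≤ j) (hj : j < L.length), L[i]'(by omega) ≤ L[j]'hj := by
    intro i j hij hj
    rcases eq_or_lt_of_le hij with rfl | h
    · exact le_rfl
    · exact List.pairwise_iff_getElem.1 hsort i j (by omega) hj h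
  have aux : ∀ i, ∀ h : i + 2 < L.length, L[i]'(by omega) + 1 ≠ L[i+2]'h := by
    intro i h hne
    have h1 : i + 1 < L.length := by omega
    have le1 : L[i]'(by omega) ≤ L[i+1]'h1 := hle i (i+1) (by omega) h1
    have le2 : L[i+1]'h1 ≤ L[i+2]'h := hle (i+1) (i+2) (by omega) h
    rcases (show L[i]'(by omega) = L[i+1]'h1 ∨ L[i+1]'h1 = L[i+2]'h by omega) with hc | hc
    · exact (hkey i h1 hc (L[i+2]'h) (List.getElem_mem h)).1 hne
    · have h2 := (hkey (i+1) h hc (L[i]'(by omega)) (List.getElem_mem (by omega))).2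
      omega
  have auxk : ∀ k i, ∀ h : i + 2 * (k + 1) < L.length,
      L[i]'(by omega) + 1 ≠ L[i + 2 * (k + 1)]'h := by
    intro k
    induction k with
    | zero =>
      intro i h hne
      simp only [show i + 2 * (0 + 1) = i + 2 from by omega] at hne
      exact aux i (by omega) hne
    | succ k ih =>
      intro i h hne
      have h2 : i + 2 < L.length := by omega
      have le1 : L[i]'(by omega) ≤ L[i+2]'h2 := hle i (i+2) (by omega) h2
      have le2 : L[i+2]'h2 ≤ L[i + 2*(k+1+1)]'h := hle (i+2) _ (by omega) h
      rcases (show L[i+2]'h2 = L[i]'(by omega) ∨ L[i+2]'h2 = L[i]'(by omega) + 1 by omega)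
        with hc | hc
      · have h3 : i + 2 + 2 * (k + 1) < L.length := by omega
        have := ih (i + 2) h3
        rw [hc] at this
        apply this
        rw [hne]
        congr 1
        omega
      · exact aux i h2 hc.symm
  intro i j hpar hi hj hne
  rcases lt_trichotomy i j with h | rfl | h
  · obtain ⟨k, rfl⟩ : ∃ k, j = i + 2 * (k + 1) := ⟨(j - i - 2)/2, by omega⟩
    exact auxk _ i hj hne
  · omega
  · have := hle j i (le_of_lt h) hi
    omega

lemma sort_hkey {F G : Finset ℕ}
    (hF : ∀ x ∈ F, x + 1 ∉ F) (hG : ∀ x ∈ G, x + 1 ∉ G) :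
    ∀ i, ∀ h : i + 1 < ((F.val + G.val).sort (· ≤ ·)).length,
      ((F.val + G.val).sort (· ≤ ·))[i]'(by omega) = ((F.val + G.val).sort (· ≤ ·))[i+1]'h →
      ∀ w ∈ ((F.val + G.val).sort (· ≤ ·)),
        ((F.val + G.val).sort (· ≤ ·))[i]'(by omega) + 1 ≠ w ∧
        w + 1 ≠ ((F.val + G.val).sort (· ≤ ·))[i]'(by omega) := by
  intro i h heq w hw
  have hmem := count_ge_two h heq
  have hw' := mem_union_of_mem_sort hw
  constructor <;> intro hc
  · rcases hw' with hf | hg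
    · exact hF _ hmem.1 (hc ▸ hf)
    · exact hG _ hmem.2 (hc ▸ hg)
  · rcases hw' with hf | hg
    · exact hF w hf (hc ▸ hmem.1)
    · exact hG w hg (hc ▸ hmem.2)

lemma sortFst_no_consec {F G : Finset ℕ}
    (hF : ∀ x ∈ F, x + 1 ∉ F) (hG : ∀ x ∈ G, x + 1 ∉ G) :
    ∀ x ∈ sortFst F G, x + 1 ∉ sortFst F G := by
  intro x hx hx1
  obtain ⟨i, hpi, hi, rfl⟩ := mem_sortFst_iff.1 hx
  obtain ⟨j, hpj, hj, hj'⟩ := mem_sortFst_iff.1 hx1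
  exact list_no_consec _ (Multiset.pairwise_sort _ _) (sort_hkey hF hG) i j (by omega) hi hj hj'.symm

lemma sortSnd_no_consec {F G : Finset ℕ}
    (hF : ∀ x ∈ F, x + 1 ∉ F) (hG : ∀ x ∈ G, x + 1 ∉ G) :
    ∀ x ∈ sortSnd F G, x + 1 ∉ sortSnd F G := by
  intro x hx hx1
  obtain ⟨i, hpi, hi, rfl⟩ := mem_sortSnd_iff.1 hx
  obtain ⟨j, hpj, hj, hj'⟩ := mem_sortSnd_iff.1 hx1
  exact list_no_consec _ (Multiset.pairwise_sort _ _) (sort_hkey hF hG) i j (by omega) hi hj hj'.symm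

lemma sortFst_subset {F G : Finset ℕ} {x : ℕ} (hx : x ∈ sortFst F G) : x ∈ F ∨ x ∈ G := by
  obtain ⟨i, _, hi, rfl⟩ := mem_sortFst_iff.1 hx
  exact getElem_sort_mem hi

lemma sortSnd_subset {F G : Finset ℕ} {x : ℕ} (hx : x ∈ sortSnd F G) : x ∈ F ∨ x ∈ G := by
  obtain ⟨i, _, hi, rfl⟩ := mem_sortSnd_iff.1 hx
  exact getElem_sort_mem hi

/-! ### The backward direction: a path graph is sortable -/

section Complex
variable {V : Type*} [DecidableEq V] {G : SimpleGraph V} {f : V → ℕ}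

lemma mem_complex_iff [Fintype V]
    (hadj : ∀ u v, G.Adj u v ↔ f u + 1 = f v ∨ f v + 1 = f u) (F : Finset ℕ) :
    F ∈ labeledIndepComplex G f ↔
      (∀ x ∈ F, ∃ v, f v = x) ∧ (∀ x ∈ F, x + 1 ∉ F) := by
  constructor
  · rintro ⟨H, hind, rfl⟩
    constructor
    · intro x hx
      obtain ⟨a, _, rfl⟩ := Finset.mem_image.1 hx
      exact ⟨a, rfl⟩
    · intro x hx hx1
      obtain ⟨a, ha, rfl⟩ := Finset.mem_image.1 hx
      obtain ⟨b, hb, hfb⟩ := Finset.mem_image.1 hx1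
      exact hind a ha b hb ((hadj a b).2 (Or.inl hfb.symm))
  · rintro ⟨hrange, hcons⟩
    refine ⟨Finset.univ.filter (fun v => f v ∈ F), ?_, ?_⟩
    · intro a ha b hb hab
      rcases (hadj a b).1 hab with hc | hc
      · exact hcons _ (Finset.mem_filter.1 ha).2 (hc ▸ (Finset.mem_filter.1 hb).2)
      · exact hcons _ (Finset.mem_filter.1 hb).2 (hc ▸ (Finset.mem_filter.1 ha).2)
    · ext x
      simp only [Finset.mem_image, Finset.mem_filter, Finset.mem_univ, true_and]
      constructor
      · intro hx
        obtain ⟨v, rfl⟩ := hrange x hx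
        exact ⟨v, hx, rfl⟩
      · rintro ⟨v, hv, rfl⟩
        exact hv

lemma sortable_of_adj_iff [Fintype V]
    (hadj : ∀ u v, G.Adj u v ↔ f u + 1 = f v ∨ f v + 1 = f u) :
    SortableWrt (labeledIndepComplex G f) := by
  intro F hF Gs hGs
  rw [mem_complex_iff hadj] at hF hGs
  constructor
  · rw [mem_complex_iff hadj]
    refine ⟨fun x hx => ?_, sortFst_no_consec hF.2 hGs.2⟩
    rcases sortFst_subset hx with h | h
    · exact hF.1 x h
    · exact hGs.1 x h
  · rw [mem_complex_iff hadj]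
    refine ⟨fun x hx => ?_, sortSnd_no_consec hF.2 hGs.2⟩
    rcases sortSnd_subset hx with h | h
    · exact hF.1 x h
    · exact hGs.1 x h

lemma backward [Fintype V] (e : G ≃g SimpleGraph.pathGraph (Fintype.card V)) :
    SortableGraph G := by
  refine ⟨fun v => ((e v : Fin (Fintype.card V)) : ℕ), ?_, ?_⟩
  · intro a b hab
    exact e.injective (Fin.val_injective hab)
  · apply sortable_of_adj_iff
    intro u v
    rw [← e.map_rel_iff, SimpleGraph.pathGraph_adj]

/-! ### The forward direction -/

lemma sort_eq_of_sorted {s : Multiset ℕ} {l : List ℕ} (h : s = ↑l) (hl : l.Pairwise (· ≤ ·)) :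
    s.sort (· ≤ ·) = l :=
  List.Perm.eq_of_pairwise' (Multiset.pairwise_sort _ _) hl
    (Multiset.coe_eq_coe.1 (by rw [Multiset.sort_eq, h]))

lemma sortFst_three {F G : Finset ℕ} {a b c : ℕ}
    (h : (F.val + G.val).sort (· ≤ ·) = [a, b, c]) :
    sortFst F G = {a, c} := by
  unfold sortFst
  rw [h]
  have : (((([a, b, c] : List ℕ)).zipIdx.filter (fun p => p.2 % 2 = 0)).map Prod.fst) = [a, c] := by
    simp [List.filter]
  rw [this]
  simp

lemma pair_add_singleton {x y z : ℕ} (hxy : x ≠ y) :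
    ({x, y} : Finset ℕ).val + ({z} : Finset ℕ).val = (([z, x, y] : List ℕ) : Multiset ℕ) := by
  rw [Finset.insert_val_of_notMem (by simpa using hxy)]
  simp only [Finset.singleton_val]
  show (({x} : Multiset ℕ) + (({y} : Multiset ℕ) + 0)) + (({z} : Multiset ℕ) + 0)
      = ({z} : Multiset ℕ) + (({x} : Multiset ℕ) + (({y} : Multiset ℕ) + 0))
  abel

lemma no_triangle (ha : G.IsAcyclic) {u v z : V}
    (h1 : G.Adj u v) (h2 : G.Adj v z) (h3 : G.Adj z u) : False := by
  have e1 := h1.ne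
  have e2 := h2.ne
  have e3 := h3.ne
  have hp : (SimpleGraph.Walk.cons h2 (SimpleGraph.Walk.cons h3 SimpleGraph.Walk.nil)).IsPath := by
    simp [SimpleGraph.Walk.isPath_def]
    exact ⟨⟨e2, fun h => e1 (h.symm)⟩, e3⟩
  have hc : (SimpleGraph.Walk.cons h1
      (SimpleGraph.Walk.cons h2 (SimpleGraph.Walk.cons h3 SimpleGraph.Walk.nil))).IsCycle := by
    rw [SimpleGraph.Walk.cons_isCycle_iff]
    refine ⟨hp, ?_⟩
    simp [Sym2.eq_iff]
    tauto

  exact ha _ hc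

lemma singleton_mem_complex (v : V) : ({f v} : Finset ℕ) ∈ labeledIndepComplex G f :=
  ⟨{v}, by simp, by simp⟩

lemma pair_mem_complex_iff (hf : Function.Injective f) {u v : V} (huv : u ≠ v) :
    ({f u, f v} : Finset ℕ) ∈ labeledIndepComplex G f ↔ ¬ G.Adj u v := by
  constructor
  · rintro ⟨H, hind, hEq⟩
    have hu : u ∈ H := by
      have : f u ∈ H.image f := by rw [← hEq]; simp
      obtain ⟨a, ha, hfa⟩ := Finset.mem_image.1 this
      rwa [hf hfa] at ha
    have hv : v ∈ H := by
      have : f v ∈ H.image f := by rw [← hEq]; simp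
      obtain ⟨a, ha, hfa⟩ := Finset.mem_image.1 this
      rwa [hf hfa] at ha
    exact hind u hu v hv
  · intro h
    refine ⟨{u, v}, ?_, by simp [Finset.image_insert]⟩
    intro a ha b hb hab
    simp only [Finset.mem_insert, Finset.mem_singleton] at ha hb
    rcases ha with rfl | rfl <;> rcases hb with rfl | rfl
    · exact hab.ne rfl
    · exact h hab
    · exact h hab.symm
    · exact hab.ne rfl

lemma adj_between (hS : SortableWrt (labeledIndepComplex G f)) (hf : Function.Injective f)
    {u v z : V} (huv : G.Adj u v) (h1 : f u < f z) (h2 : f z < f v) :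
    G.Adj u z ∧ G.Adj z v := by
  have huv' : u ≠ v := huv.ne
  have hsorted : ([f u, f z, f v] : List ℕ).Pairwise (· ≤ ·) := by
    simp [List.pairwise_cons]
    omega
  constructor
  · by_contra h
    have hpair : ({f u, f z} : Finset ℕ) ∈ labeledIndepComplex G f :=
      (pair_mem_complex_iff hf (fun he => by subst he; omega)).2 h
    have hsort : (({f u, f z} : Finset ℕ).val + ({f v} : Finset ℕ).val).sort (· ≤ ·)
        = [f u, f z, f v] := by
      apply sort_eq_of_sorted _ hsorted
      rw [pair_add_singleton (by omega)]
      exact Multiset.coe_eq_coe.2 (List.perm_append_comm (l₁ := [f v]) (l₂ := [f u, f z]))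
    have := (hS _ hpair _ (singleton_mem_complex v)).1
    rw [sortFst_three hsort] at this
    exact (pair_mem_complex_iff hf huv').1 this huv
  · by_contra h
    have hpair : ({f z, f v} : Finset ℕ) ∈ labeledIndepComplex G f :=
      (pair_mem_complex_iff hf (fun he => by subst he; omega)).2 h
    have hsort : (({f z, f v} : Finset ℕ).val + ({f u} : Finset ℕ).val).sort (· ≤ ·)
        = [f u, f z, f v] := by
      apply sort_eq_of_sorted _ hsorted
      rw [pair_add_singleton (by omega)]
    have := (hS _ hpair _ (singleton_mem_complex u)).1
    rw [sortFst_three hsort] at this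
    exact (pair_mem_complex_iff hf huv').1 this huv

lemma cross_edge {φ : V → Fin n} {x y : V} (w : G.Walk x y) :
    ∀ i : ℕ, (φ x : ℕ) ≤ i → i < (φ y : ℕ) →
      ∃ a b, G.Adj a b ∧ (φ a : ℕ) ≤ i ∧ i < (φ b : ℕ) := by
  induction w with
  | nil => intro i h1 h2; omega
  | cons h p ih =>
    intro i h1 h2
    rcases le_or_gt (φ _ : ℕ) i with hle | hlt
    · exact ih i hle h2
    · exact ⟨_, _, h, h1, hlt⟩

lemma forward [Fintype V] (htree : G.IsTree) (h : SortableGraph G) :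
    Nonempty (G ≃g SimpleGraph.pathGraph (Fintype.card V)) := by
  classical
  obtain ⟨f, hf, hS⟩ := h
  have hcard : (Finset.univ.image f).card = Fintype.card V := by
    rw [Finset.card_image_of_injective _ hf, Finset.card_univ]
  set n := Fintype.card V with hn
  let e1 := Finset.orderIsoOfFin _ hcard
  have hmem : ∀ v : V, f v ∈ Finset.univ.image f := fun v => Finset.mem_image_of_mem f
    (Finset.mem_univ v)
  let φ0 : V → Fin n := fun v => e1.symm ⟨f v, hmem v⟩
  have hφlt : ∀ u v : V, φ0 u < φ0 v ↔ f u < f v := by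
    intro u v
    show e1.symm ⟨f u, hmem u⟩ < e1.symm ⟨f v, hmem v⟩ ↔ f u < f v
    rw [OrderIso.lt_iff_lt]
    exact Subtype.mk_lt_mk
  have hφinj : Function.Injective φ0 := by
    intro a b hab
    apply hf
    have := e1.symm.injective hab
    simpa using this
  have hφbij : Function.Bijective φ0 :=
    (Fintype.bijective_iff_injective_and_card φ0).2 ⟨hφinj, by simp [hn]⟩
  let φe : V ≃ Fin n := Equiv.ofBijective φ0 hφbij
  have hφe : ∀ v, φe v = φ0 v := fun _ => rfl
  have hlt : ∀ u v : V, φe u < φe v ↔ f u < f v := hφlt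
  -- adjacency implies consecutive
  have hmain : ∀ u v, G.Adj u v → f u < f v → (φe u : ℕ) + 1 = (φe v : ℕ) := by
    intro u v hadj hltuv
    by_contra hne
    have hφuv : (φe u : ℕ) < (φe v : ℕ) := (hlt u v).2 hltuv
    have hlt1 : (φe u : ℕ) + 1 < n := by
      have := (φe v).isLt
      omega
    set z := φe.symm ⟨(φe u : ℕ) + 1, hlt1⟩ with hz
    have hφz : (φe z : ℕ) = (φe u : ℕ) + 1 := by
      rw [hz, Equiv.apply_symm_apply]
    have hz1 : f u < f z := by
      rw [← hlt]
      rw [Fin.lt_def]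
      omega
    have hz2 : f z < f v := by
      rw [← hlt]
      rw [Fin.lt_def]
      omega
    obtain ⟨ha1, ha2⟩ := adj_between hS hf hadj hz1 hz2
    exact no_triangle htree.2 hadj ha2.symm ha1.symm
  have hstep : ∀ u v, G.Adj u v → (φe u : ℕ) + 1 = (φe v : ℕ) ∨ (φe v : ℕ) + 1 = (φe u : ℕ) := by
    intro u v hadj
    have : f u ≠ f v := fun he => hadj.ne (hf he)
    rcases lt_or_gt_of_ne this with hlt' | hlt'
    · exact Or.inl (hmain u v hadj hlt')
    · exact Or.inr (hmain v u hadj.symm hlt')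
  -- consecutive implies adjacency
  have hconsec : ∀ i : ℕ, ∀ hi : i + 1 < n,
      G.Adj (φe.symm ⟨i, by omega⟩) (φe.symm ⟨i + 1, hi⟩) := by
    intro i hi
    by_contra hΓ
    obtain ⟨w⟩ := htree.1 (φe.symm ⟨i, by omega⟩) (φe.symm ⟨i + 1, hi⟩)
    obtain ⟨a, b, hadj, hab1, hab2⟩ := cross_edge (φ := fun v => φe v) w i
      (by simp) (by simp)
    rcases hstep a b hadj with hc | hc
    · have hφa : (φe a : ℕ) = i := by omega
      have hφb : (φe b : ℕ) = i + 1 := by omega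
      have ha : a = φe.symm ⟨i, Nat.lt_of_succ_lt hi⟩ := (Equiv.eq_symm_apply φe).2 (Fin.ext hφa)
      have hb : b = φe.symm ⟨i + 1, hi⟩ := (Equiv.eq_symm_apply φe).2 (Fin.ext hφb)
      subst ha hb
      exact hΓ hadj
    · omega
  -- build the isomorphism
  refine ⟨⟨φe, ?_⟩⟩
  intro u v
  rw [SimpleGraph.pathGraph_adj]
  constructor
  · rintro (hc | hc)
    · have hi : (φe u : ℕ) + 1 < n := by rw [hc]; exact (φe v).isLt
      have := hconsec (φe u : ℕ) hi
      have hu : φe.symm ⟨(φe u : ℕ), by omega⟩ = u := by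
        simp
      have hv : φe.symm ⟨(φe u : ℕ) + 1, hi⟩ = v := by
        have : φe v = ⟨(φe u : ℕ) + 1, hi⟩ := Fin.ext hc.symm
        rw [← this]
        simp
      rwa [hu, hv] at this
    · have hi : (φe v : ℕ) + 1 < n := by rw [hc]; exact (φe u).isLt
      have := hconsec (φe v : ℕ) hi
      have hv : φe.symm ⟨(φe v : ℕ), by omega⟩ = v := by
        simp
      have hu : φe.symm ⟨(φe v : ℕ) + 1, hi⟩ = u := by
        have : φe u = ⟨(φe v : ℕ) + 1, hi⟩ := Fin.ext hc.symm
        rw [← this]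
        simp
      rw [hv, hu] at this
      exact this.symm
  · intro hadj
    exact hstep u v hadj

end Complex

theorem stmt_15 {V : Type*} [Fintype V] [DecidableEq V]
    (G : SimpleGraph V) (htree : G.IsTree) :
    SortableGraph G ↔ Nonempty (G ≃g SimpleGraph.pathGraph (Fintype.card V)) := by
  constructor
  · exact forward htree
  · rintro ⟨e⟩
    exact backward e
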